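/- Let L¹ = …l¹_2l¹_1 and L² = …l²_2l²_1 be admissible left-infinite sequences such that l¹_k = l²_k for all k > n (for some n ∈ ℕ). If #_1(l¹_n…l¹_1) and #_1(l²_n…l²_1) have the same parity, then for all admissible left-infinite ←x, ←y agreeing on their last n symbols (x_n…x_1 = y_n…y_1), one has ←x ≺_{L¹} ←y iff ←x ≺_{L²} ←y; if the parities differ, then ←x ≺_{L¹} ←y iff ←x ≻_{L²} ←y. -/

import Mathlib

/-- number of `true`s among `s 0, …, s (k-1)` (i.e. `#₁(s_k … s_1)` for a
left-infinite sequence `…s₂s₁` coded by `s : ℕ → Bool` with `s 0 = s₁`). -/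
def cnt (s : ℕ → Bool) (k : ℕ) : ℕ :=
  ((Finset.range k).filter (fun i => s i = true)).card

/-- parity-lexicographic strict order on finite binary words. -/
def plLt (s t : List Bool) : Prop :=
  ∃ k, k < s.length ∧ k < t.length ∧ s.take k = t.take k ∧
    s.getD k false ≠ t.getD k false ∧
    ((s.getD k false = false ∧ Even ((s.take k).count true)) ∨
     (s.getD k false = true ∧ Odd ((s.take k).count true)))

def plLe (s t : List Bool) : Prop := s = t ∨ plLt s t

/-- the word `c_{start+1} … c_{start+len}` of the kneading sequence `ν`
(where `c_{i+1} = ν i`). -/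
def nuWord (ν : ℕ → Bool) (start len : ℕ) : List Bool :=
  (List.range len).map (fun j => ν (start + j))

/-- `a = a₁…a_n` is admissible w.r.t. the kneading sequence `ν`:
`c₂…c_{2+n-i} ⪯ a_i…a_n ⪯ c₁…c_{1+n-i}` for all `i`. -/
def AdmissibleWord (ν : ℕ → Bool) (a : List Bool) : Prop :=
  ∀ i, i < a.length →
    plLe (nuWord ν 1 (a.length - i)) (a.drop i) ∧
    plLe (a.drop i) (nuWord ν 0 (a.length - i))

/-- `ν` is an admissible kneading sequence: all of its finite subwords are admissible. -/
def AdmissibleSeq (ν : ℕ → Bool) : Prop :=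
  ∀ k len, AdmissibleWord ν (nuWord ν k len)

/-- the finite subword `s_{k+len} … s_{k+1}` (read forward in time, i.e. with
decreasing index) of the left-infinite sequence `…s₂s₁` coded by `s` (`s 0 = s₁`). -/
def leftWord (s : ℕ → Bool) (k len : ℕ) : List Bool :=
  ((List.range len).map (fun j => s (k + j))).reverse

/-- a left-infinite sequence is admissible iff all of its finite subwords are. -/
def AdmissibleLeft (ν : ℕ → Bool) (s : ℕ → Bool) : Prop :=
  ∀ k len, AdmissibleWord ν (leftWord s k len)

/-- the order `≺_L` on left-infinite sequences determined by `L = …l₂l₁`. -/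
def ltL (L s t : ℕ → Bool) : Prop :=
  ∃ k, (∀ i, i < k → s i = t i) ∧ s k ≠ t k ∧
    ((t k = L k ∧ Even (cnt s k + cnt L k)) ∨
     (s k = L k ∧ ¬ Even (cnt s k + cnt L k)))


lemma cnt_split (s : ℕ → Bool) {n k : ℕ} (h : n ≤ k) :
    cnt s k = cnt s n + ((Finset.Ico n k).filter (fun i => s i = true)).card := by
  unfold cnt
  rw [← Finset.card_union_of_disjoint, ← Finset.filter_union, Finset.range_eq_Ico, Finset.range_eq_Ico,
    Finset.Ico_union_Ico_eq_Ico (Nat.zero_le _) h, ← Finset.range_eq_Ico]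
  exact Finset.disjoint_filter_filter
    (by rw [Finset.range_eq_Ico]; exact Finset.Ico_disjoint_Ico_consecutive 0 n k)

lemma cnt_congr (s t : ℕ → Bool) (k : ℕ) (h : ∀ i, i < k → s i = t i) :
    cnt s k = cnt t k := by
  unfold cnt
  congr 1
  exact Finset.filter_congr (fun i hi => by rw [h i (Finset.mem_range.mp hi)])

lemma cnt_tail (L1 L2 : ℕ → Bool) (n : ℕ) (htail : ∀ k, n ≤ k → L1 k = L2 k)
    {k : ℕ} (hk : n ≤ k) :
    (cnt L1 k + cnt L2 k) % 2 = (cnt L1 n + cnt L2 n) % 2 := by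
  have e1 := cnt_split L1 hk
  have e2 := cnt_split L2 hk
  have e3 : ((Finset.Ico n k).filter (fun i => L1 i = true)).card
      = ((Finset.Ico n k).filter (fun i => L2 i = true)).card := by
    congr 1
    exact Finset.filter_congr (fun i hi => by rw [htail i (Finset.mem_Ico.mp hi).1])
  omega

lemma key1 (L1 L2 x y : ℕ → Bool) (n : ℕ) (htail : ∀ k, n ≤ k → L1 k = L2 k)
    (hxy : ∀ i, i < n → x i = y i) (hpar : Even (cnt L1 n + cnt L2 n))
    (h : ltL L1 x y) : ltL L2 x y := by
  obtain ⟨k, hagree, hne, hc⟩ := h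
  have hk : n ≤ k := by
    by_contra hkn
    exact hne (hxy k (by omega))
  have hp := cnt_tail L1 L2 n htail hk
  have hE : Even (cnt x k + cnt L1 k) ↔ Even (cnt x k + cnt L2 k) := by
    rw [Nat.even_iff] at hpar ⊢
    rw [Nat.even_iff]
    omega
  refine ⟨k, hagree, hne, ?_⟩
  rw [← htail k hk, ← hE]
  exact hc

lemma key2 (L1 L2 x y : ℕ → Bool) (n : ℕ) (htail : ∀ k, n ≤ k → L1 k = L2 k)
    (hxy : ∀ i, i < n → x i = y i) (hpar : ¬ Even (cnt L1 n + cnt L2 n))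
    (h : ltL L1 x y) : ltL L2 y x := by
  obtain ⟨k, hagree, hne, hc⟩ := h
  have hk : n ≤ k := by
    by_contra hkn
    exact hne (hxy k (by omega))
  have hp := cnt_tail L1 L2 n htail hk
  have hcc : cnt x k = cnt y k := cnt_congr x y k hagree
  have hE : Even (cnt x k + cnt L1 k) ↔ ¬ Even (cnt y k + cnt L2 k) := by
    rw [Nat.even_iff] at hpar ⊢
    rw [Nat.even_iff]
    omega
  refine ⟨k, fun i hi => (hagree i hi).symm, hne.symm, ?_⟩
  rcases hc with ⟨h1, h2⟩ | ⟨h1, h2⟩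
  · exact Or.inr ⟨by rw [← htail k hk]; exact h1, hE.mp h2⟩
  · refine Or.inl ⟨by rw [← htail k hk]; exact h1, ?_⟩
    by_contra hEy
    exact h2 (hE.mpr hEy)

/-- If `L¹` and `L²` agree from index `n` on, then for admissible left-infinite
sequences `x, y` agreeing on their last `n` symbols: when `#₁(l¹_n…l¹_1)` and
`#₁(l²_n…l²_1)` have the same parity, `≺_{L¹}` and `≺_{L²}` agree on `x, y`,
and when the parities differ, they are reversed. -/
theorem order_same_tail (ν L1 L2 : ℕ → Bool) (hν : AdmissibleSeq ν)
    (hL1 : AdmissibleLeft ν L1) (hL2 : AdmissibleLeft ν L2)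
    (n : ℕ) (htail : ∀ k, n ≤ k → L1 k = L2 k)
    (x y : ℕ → Bool) (hx : AdmissibleLeft ν x) (hy : AdmissibleLeft ν y)
    (hxy : ∀ i, i < n → x i = y i) :
    (Even (cnt L1 n + cnt L2 n) → (ltL L1 x y ↔ ltL L2 x y)) ∧
      (¬ Even (cnt L1 n + cnt L2 n) → (ltL L1 x y ↔ ltL L2 y x)) := by
  have htail' : ∀ k, n ≤ k → L2 k = L1 k := fun k hk => (htail k hk).symm
  have hxy' : ∀ i, i < n → y i = x i := fun i hi => (hxy i hi).symm
  constructor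
  · intro hpar
    exact ⟨key1 L1 L2 x y n htail hxy hpar,
      key1 L2 L1 x y n htail' hxy (by rwa [Nat.add_comm] at hpar)⟩
  · intro hpar
    exact ⟨key2 L1 L2 x y n htail hxy hpar,
      key2 L2 L1 y x n htail' hxy' (by rwa [Nat.add_comm] at hpar)⟩
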